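/- Let X ⊆ 2^ω. Then X is a Q-set (every subset of X is a relative G_δ of X) if and only if for every Y ⊆ X there exists Z ⊆ 2^{<ω} with {x↾n : n ∈ ω} ⊆* Z for all x ∈ Y and {x↾n : n ∈ ω} ∩ Z finite for all x ∈ X∖Y. -/
import Mathlib


open Set Topology

/-- The length-n initial segment of x : ℕ → Bool as a finite binary sequence. -/
def res (x : ℕ → Bool) (n : ℕ) : List Bool := (List.range n).map x

/-- The branch a_x = {x↾n : n ∈ ω} ⊆ 2^{<ω}. -/
def branch (x : ℕ → Bool) : Set (List Bool) := Set.range (res x)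

/-- Y is a relative G_δ subset of X. -/
def IsRelGdelta {α : Type*} [TopologicalSpace α] (X Y : Set α) : Prop :=
  ∃ U : ℕ → Set α, (∀ n, IsOpen (U n)) ∧ Y = X ∩ ⋂ n, U n

/-- Y is a relative F_σ subset of X. -/
def IsRelFsigma {α : Type*} [TopologicalSpace α] (X Y : Set α) : Prop :=
  ∃ C : ℕ → Set α, (∀ n, IsClosed (C n)) ∧ Y = X ∩ ⋃ n, C n

/-- Z is a weak λ-set. -/
def IsWeakLambda {α : Type*} [TopologicalSpace α] (Z : Set α) : Prop :=
  ∀ Y W : Set α, Y ⊆ Z → W ⊆ Z → Y.Countable → W.Countable → Disjoint Y W →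
    ∃ H ⊆ Z, IsRelGdelta Z H ∧ IsRelFsigma Z H ∧ Y ⊆ H ∧ W ⊆ Z \ H

/-- S is an F_σ subset of the whole space. -/
def IsFsigma {α : Type*} [TopologicalSpace α] (S : Set α) : Prop :=
  ∃ C : ℕ → Set α, (∀ n, IsClosed (C n)) ∧ S = ⋃ n, C n

lemma res_length (x : ℕ → Bool) (n : ℕ) : (res x n).length = n := by simp [res]

lemma res_inj (x : ℕ → Bool) : Function.Injective (res x) := fun m n h => by
  have := congrArg List.length h; simpa [res] using this

lemma res_eq_iff (x y : ℕ → Bool) (k : ℕ) :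
    res y k = res x k ↔ ∀ i < k, y i = x i := by
  simp only [res]
  constructor
  · intro h i hi
    have h1 := List.getElem_of_eq h (i := i) (by simpa using hi)
    simpa using h1
  · intro h
    apply List.ext_getElem (by simp)
    intro i h1 h2
    simp only [List.getElem_map, List.getElem_range]
    exact h i (by simpa using h1)

def cyl (x : ℕ → Bool) (k : ℕ) : Set (ℕ → Bool) := { y | ∀ i < k, y i = x i }

lemma mem_cyl_self (x : ℕ → Bool) (k : ℕ) : x ∈ cyl x k := fun _ _ => rfl

lemma isOpen_cyl (x : ℕ → Bool) (k : ℕ) : IsOpen (cyl x k) := by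
  have h : cyl x k = ⋂ i ∈ Finset.range k, (fun y : ℕ → Bool => y i) ⁻¹' {x i} := by
    ext y; simp [cyl]
  rw [h]
  exact isOpen_biInter_finset fun i _ =>
    (continuous_apply i).isOpen_preimage _ (isOpen_discrete _)

lemma cyl_antitone (x : ℕ → Bool) {k k' : ℕ} (h : k ≤ k') : cyl x k' ⊆ cyl x k :=
  fun y hy i hi => hy i (lt_of_lt_of_le hi h)

lemma exists_cyl_subset {U : Set (ℕ → Bool)} (hU : IsOpen U) {x : ℕ → Bool} (hx : x ∈ U) :
    ∃ k, cyl x k ⊆ U := by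
  rw [isOpen_pi_iff] at hU
  obtain ⟨I, u, hu, hsub⟩ := hU x hx
  classical
  refine ⟨(I.sup id) + 1, fun y hy => hsub ?_⟩
  intro i hi
  have hyi : y i = x i := hy i (Nat.lt_succ_of_le (Finset.le_sup (f := id) hi))
  rw [hyi]; exact (hu i hi).2

/-- key: mem of cylinder via res -/
lemma mem_cyl_of_res {x y : ℕ → Bool} {k : ℕ} (h : res y k = res x k) : y ∈ cyl x k :=
  (res_eq_iff x y k).1 h

theorem stmt12 (X : Set (ℕ → Bool)) :
    (∀ Y ⊆ X, IsRelGdelta X Y) ↔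
      (∀ Y ⊆ X, ∃ Z : Set (List Bool),
        (∀ x ∈ Y, (branch x \ Z).Finite) ∧ (∀ x ∈ X \ Y, (branch x ∩ Z).Finite)) := by
  constructor
  · intro h Y hY
    obtain ⟨U, hUo, hUeq⟩ := h Y hY
    obtain ⟨W, hWo, hWeq⟩ := h (X \ Y) diff_subset
    refine ⟨{ s : List Bool | ∃ n, (∀ i ≤ n, ∀ y, res y s.length = s → y ∈ U i) ∧
        ∃ y, res y s.length = s ∧ y ∉ W n }, ?_, ?_⟩
    · -- x ∈ Y : branch x \ Z finite
      intro x hx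
      have hxX : x ∈ X := hY hx
      have hxU : ∀ n, x ∈ U n := by
        have := hUeq ▸ hx
        exact fun n => mem_iInter.1 this.2 n
      have hxW : ∃ m, x ∉ W m := by
        by_contra hc
        push_neg at hc
        have : x ∈ X \ Y := hWeq ▸ ⟨hxX, mem_iInter.2 hc⟩
        exact this.2 hx
      obtain ⟨m, hm⟩ := hxW
      have hO : IsOpen (⋂ i ∈ Finset.range (m+1), U i) :=
        isOpen_biInter_finset fun i _ => hUo i
      have hxO : x ∈ ⋂ i ∈ Finset.range (m+1), U i :=
        mem_biInter fun i _ => hxU i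
      obtain ⟨K, hK⟩ := exists_cyl_subset hO hxO
      have key : ∀ k, K ≤ k → res x k ∈ { s : List Bool |
          ∃ n, (∀ i ≤ n, ∀ y, res y s.length = s → y ∈ U i) ∧
            ∃ y, res y s.length = s ∧ y ∉ W n } := by
        intro k hk
        refine ⟨m, ?_, ⟨x, by rw [res_length], hm⟩⟩
        intro i hi y hy
        rw [res_length] at hy
        have : y ∈ cyl x K := cyl_antitone x hk (mem_cyl_of_res hy)
        exact mem_iInter₂.1 (hK this) i (Finset.mem_range.2 (Nat.lt_succ_of_le hi))
      refine Set.Finite.subset ((Set.finite_Iio K).image (res x)) ?_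
      rintro s ⟨⟨k, rfl⟩, hs⟩
      refine ⟨k, ?_, rfl⟩
      by_contra hc
      exact hs (key k (le_of_not_gt hc))
    · -- x ∈ X \ Y : branch x ∩ Z finite
      intro x hx
      have hxW : ∀ n, x ∈ W n := by
        have := hWeq ▸ hx
        exact fun n => mem_iInter.1 this.2 n
      have hxU : ∃ m, x ∉ U m := by
        by_contra hc
        push_neg at hc
        have : x ∈ Y := hUeq ▸ ⟨hx.1, mem_iInter.2 hc⟩
        exact hx.2 this
      obtain ⟨m, hm⟩ := hxU
      have hO : IsOpen (⋂ i ∈ Finset.range m, W i) :=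
        isOpen_biInter_finset fun i _ => hWo i
      have hxO : x ∈ ⋂ i ∈ Finset.range m, W i :=
        mem_biInter fun i _ => hxW i
      obtain ⟨K, hK⟩ := exists_cyl_subset hO hxO
      have key : ∀ k, K ≤ k → res x k ∉ { s : List Bool |
          ∃ n, (∀ i ≤ n, ∀ y, res y s.length = s → y ∈ U i) ∧
            ∃ y, res y s.length = s ∧ y ∉ W n } := by
        intro k hk ⟨n, hn1, y, hy1, hy2⟩
        rw [res_length] at hy1
        -- n < m since x ∈ [res x k] ⊆ U i for all i ≤ n and x ∉ U m
        have hnm : n < m := by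
          by_contra hc
          exact hm (hn1 m (le_of_not_gt hc) x (by rw [res_length]))
        have : y ∈ cyl x K := cyl_antitone x hk (mem_cyl_of_res hy1)
        exact hy2 (mem_iInter₂.1 (hK this) n (Finset.mem_range.2 hnm))
      refine Set.Finite.subset ((Set.finite_Iio K).image (res x)) ?_
      rintro s ⟨⟨k, rfl⟩, hs⟩
      refine ⟨k, ?_, rfl⟩
      by_contra hc
      exact key k (le_of_not_gt hc) hs
  · intro h Y hY
    obtain ⟨Z, h1, h2⟩ := h Y hY
    refine ⟨fun n => { y | ∃ k, n ≤ k ∧ res y k ∈ Z }, ?_, ?_⟩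
    · intro n
      rw [isOpen_iff_mem_nhds]
      rintro y ⟨k, hk, hZ⟩
      have hsub : cyl y k ⊆ {y | ∃ k', n ≤ k' ∧ res y k' ∈ Z} := by
        intro y' hy'
        exact ⟨k, hk, by rwa [(res_eq_iff y y' k).2 hy']⟩
      exact Filter.mem_of_superset ((isOpen_cyl y k).mem_nhds (mem_cyl_self y k)) hsub
    · ext x
      constructor
      · intro hx
        refine ⟨hY hx, mem_iInter.2 fun n => ?_⟩
        have hfin : {k | res x k ∉ Z}.Finite := by
          have : {k | res x k ∉ Z} ⊆ (res x) ⁻¹' (branch x \ Z) := by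
            intro k hk; exact ⟨⟨k, rfl⟩, hk⟩
          exact Set.Finite.subset ((h1 x hx).preimage (res_inj x).injOn) this
        obtain ⟨B, hB⟩ := hfin.bddAbove
        refine ⟨max n (B+1), le_max_left _ _, ?_⟩
        by_contra hc
        have := hB hc
        omega
      · rintro ⟨hxX, hxI⟩
        by_contra hxY
        have hx' : x ∈ X \ Y := ⟨hxX, hxY⟩
        have hfin : {k | res x k ∈ Z}.Finite := by
          have : {k | res x k ∈ Z} ⊆ (res x) ⁻¹' (branch x ∩ Z) := by
            intro k hk; exact ⟨⟨k, rfl⟩, hk⟩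
          exact Set.Finite.subset ((h2 x hx').preimage (res_inj x).injOn) this
        obtain ⟨B, hB⟩ := hfin.bddAbove
        obtain ⟨k, hk1, hk2⟩ := mem_iInter.1 hxI (B+1)
        have := hB hk2
        omega
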